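/- On the jet space of surfaces z = z(x,y) in the contact space ℝ³ with the GL(2,ℝ)-invariants I₁' = (xz_x + yz_y − xy)/(2z − xy) (well-defined where 2z ≠ xy) and derivations ∇₁ = xD_x + yD_y, ∇₂ = (x − 2z_y)D_x + (2z_x − y)D_y, the identities I_{2a}' = ∇₁(I₁') + 2(I₁')² − I₁' and I_{2b}' = −½∇₁(I₁') − ½∇₂(I₁') − (I₁')² + I₁' hold, where I_{2a}' = (x²z_{xx} + 2xyz_{xy} + y²z_{yy} − xy)/(2z − xy) and I_{2b}' = (x(z_y − x)z_{xx} − yz_xz_{yy} + (y(z_y − x) − xz_x)z_{xy} + xz_x)/(2z − xy). -/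

import Mathlib

open Matrix

noncomputable section

/-- Coordinates on the 2-jet space of surfaces `z = z(x,y)`:
`(x, y, z, z_x, z_y, z_xx, z_xy, z_yy)`. -/
def Dx (F : (Fin 8 → ℝ) → ℝ) : (Fin 8 → ℝ) → ℝ := fun p =>
  fderiv ℝ F p ![1, 0, p 3, p 5, p 6, 0, 0, 0]

def Dy (F : (Fin 8 → ℝ) → ℝ) : (Fin 8 → ℝ) → ℝ := fun p =>
  fderiv ℝ F p ![0, 1, p 4, p 6, p 7, 0, 0, 0]

/-- `∇₁ = x D_x + y D_y`. -/
def Nabla1 (F : (Fin 8 → ℝ) → ℝ) : (Fin 8 → ℝ) → ℝ := fun p =>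
  p 0 * Dx F p + p 1 * Dy F p

/-- `∇₂ = (x − 2z_y) D_x + (2z_x − y) D_y`. -/
def Nabla2 (F : (Fin 8 → ℝ) → ℝ) : (Fin 8 → ℝ) → ℝ := fun p =>
  (p 0 - 2 * p 4) * Dx F p + (2 * p 3 - p 1) * Dy F p

/-- `I₁' = (x z_x + y z_y − xy)/(2z − xy)`. -/
def I1' : (Fin 8 → ℝ) → ℝ := fun p =>
  (p 0 * p 3 + p 1 * p 4 - p 0 * p 1) / (2 * p 2 - p 0 * p 1)

/-- `I_{2a}' = (x²z_xx + 2xyz_xy + y²z_yy − xy)/(2z − xy)`. -/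
def I2a' : (Fin 8 → ℝ) → ℝ := fun p =>
  ((p 0) ^ 2 * p 5 + 2 * p 0 * p 1 * p 6 + (p 1) ^ 2 * p 7 - p 0 * p 1) / (2 * p 2 - p 0 * p 1)

/-- `I_{2b}' = (x(z_y − x)z_xx − yz_xz_yy + (y(z_y − x) − xz_x)z_xy + xz_x)/(2z − xy)`. -/
def I2b' : (Fin 8 → ℝ) → ℝ := fun p =>
  (p 0 * (p 4 - p 0) * p 5 - p 1 * p 3 * p 7 + (p 1 * (p 4 - p 0) - p 0 * p 3) * p 6
    + p 0 * p 3) / (2 * p 2 - p 0 * p 1)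

lemma fderiv_I1'_apply (p v : Fin 8 → ℝ) (h : 2 * p 2 - p 0 * p 1 ≠ 0) :
    fderiv ℝ I1' p v
    = ((v 0 * p 3 + p 0 * v 3 + v 1 * p 4 + p 1 * v 4 - (v 0 * p 1 + p 0 * v 1)) * (2 * p 2 - p 0 * p 1)
       - (p 0 * p 3 + p 1 * p 4 - p 0 * p 1) * (2 * v 2 - (v 0 * p 1 + p 0 * v 1)))
      / (2 * p 2 - p 0 * p 1) ^ 2 := by
  have hp : ∀ i : Fin 8, HasFDerivAt (𝕜 := ℝ) (fun q : Fin 8 → ℝ => q i)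
      (ContinuousLinearMap.proj i) p := fun i => hasFDerivAt_apply i p
  have hN := (((hp 0).mul (hp 3)).add ((hp 1).mul (hp 4))).sub ((hp 0).mul (hp 1))
  have hD := ((hp 2).const_mul (2:ℝ)).sub ((hp 0).mul (hp 1))
  have hInv := (hasFDerivAt_inv' (𝕜 := ℝ) h).comp p hD
  have hQ := hN.mul hInv
  rw [show I1'
      = fun p : Fin 8 → ℝ => (p 0 * p 3 + p 1 * p 4 - p 0 * p 1) *
        ((Inv.inv ∘ fun q : Fin 8 → ℝ => 2 * q 2 - q 0 * q 1) p) from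
      funext fun q => div_eq_mul_inv _ _, (show HasFDerivAt (fun p : Fin 8 → ℝ => (p 0 * p 3 + p 1 * p 4 - p 0 * p 1) *
        ((Inv.inv ∘ fun q : Fin 8 → ℝ => 2 * q 2 - q 0 * q 1) p)) _ p from hQ).fderiv]
  simp [ContinuousLinearMap.proj_apply, ContinuousLinearMap.mulLeftRight_apply]
  field_simp
  ring

theorem stmt_19 : ∀ p : Fin 8 → ℝ, 2 * p 2 - p 0 * p 1 ≠ 0 →
    I2a' p = Nabla1 I1' p + 2 * (I1' p) ^ 2 - I1' p ∧
    I2b' p = -(1 / 2) * Nabla1 I1' p - (1 / 2) * Nabla2 I1' p - (I1' p) ^ 2 + I1' p := by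
  intro p h
  have hx : Dx I1' p = ((p 3 + p 0 * p 5 + p 1 * p 6 - p 1) * (2 * p 2 - p 0 * p 1)
      - (p 0 * p 3 + p 1 * p 4 - p 0 * p 1) * (2 * p 3 - p 1)) / (2 * p 2 - p 0 * p 1) ^ 2 := by
    rw [Dx, fderiv_I1'_apply p _ h]
    simp only [Matrix.cons_val]
    norm_num
    try ring
  have hy : Dy I1' p = ((p 4 + p 0 * p 6 + p 1 * p 7 - p 0) * (2 * p 2 - p 0 * p 1)
      - (p 0 * p 3 + p 1 * p 4 - p 0 * p 1) * (2 * p 4 - p 0)) / (2 * p 2 - p 0 * p 1) ^ 2 := by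
    rw [Dy, fderiv_I1'_apply p _ h]
    simp only [Matrix.cons_val]
    norm_num
    try ring
  constructor
  · rw [I2a', Nabla1, I1', hx, hy]
    field_simp
    try ring
  · rw [I2b', Nabla1, Nabla2, I1', hx, hy]
    field_simp
    try ring
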